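/- In the lower-dimensional setting, for every fuzzy cover q ∈ Δ̄_N and every i ∈ N, the global worth decomposes as W(q) = W_i(q_i | q_{−i}) + W_{−i}(q_{−i}), where W_i(q_i | q_{−i}) = ∑_{A ∈ F_i} q_i^A · w_{q_{−i}}(A) is linear in q_i; consequently, for every q ∈ Δ̄_N there exists q̄ ∈ Δ̄_N with every coordinate q̄_i an extreme point of Δ̄_i and W(q̄) ≥ W(q). -/

import Mathlib

open Finset

/-- Möbius inversion on the poset of feasible subsets `F`, defined recursively by
`μ^w(A) = w(A) − ∑_{B ∈ F, B ⊂ A} μ^w(B)` (strict inclusion). -/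
def mobiusF {n : ℕ} (F : Finset (Finset (Fin n))) (w : Finset (Fin n) → ℝ)
    (A : Finset (Fin n)) : ℝ :=
  w A - ∑ B ∈ (F.filter (fun B => B ⊂ A)).attach, mobiusF F w B.1
termination_by A.card
decreasing_by
  exact Finset.card_lt_card (Finset.mem_filter.mp B.2).2

/-- `qi` is a membership distribution for element `i` over the feasible subsets
containing `i`: nonnegative, supported on `F_i = {A ∈ F : i ∈ A}`, summing to `1`. -/
def coordDistF {n : ℕ} (F : Finset (Finset (Fin n))) (i : Fin n)
    (qi : Finset (Fin n) → ℝ) : Prop :=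
  (∀ A, 0 ≤ qi A) ∧ (∀ A, i ∉ A ∨ A ∉ F → qi A = 0) ∧
    ∑ A ∈ F.filter (fun A => i ∈ A), qi A = 1

/-- A fuzzy cover `q ∈ Δ̄_N` in the lower-dimensional setting. -/
def fuzzyCoverF {n : ℕ} (F : Finset (Finset (Fin n)))
    (q : Fin n → Finset (Fin n) → ℝ) : Prop :=
  ∀ i, coordDistF F i (q i)

/-- Global worth `W(q) = ∑_{A ∈ F} ∑_{B ∈ F, B ⊆ A} (∏_{i∈B} q_i^A) μ^w(B)`. -/
def WF {n : ℕ} (F : Finset (Finset (Fin n))) (w : Finset (Fin n) → ℝ)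
    (q : Fin n → Finset (Fin n) → ℝ) : ℝ :=
  ∑ A ∈ F, ∑ B ∈ F.filter (fun B => B ⊆ A), (∏ i ∈ B, q i A) * mobiusF F w B

/-- `w_{q_{−i}}(A) = ∑_{B ∈ F_i, B ⊆ A} (∏_{j ∈ B∖{i}} q_j^A) μ^w(B)`. -/
def wqmiF {n : ℕ} (F : Finset (Finset (Fin n))) (w : Finset (Fin n) → ℝ)
    (q : Fin n → Finset (Fin n) → ℝ) (i : Fin n) (A : Finset (Fin n)) : ℝ :=
  ∑ B ∈ F.filter (fun B => i ∈ B ∧ B ⊆ A), (∏ j ∈ B.erase i, q j A) * mobiusF F w B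

/-- Decomposition of `WF` at coordinate `i`; purely algebraic, no hypotheses needed. -/
lemma WF_decomp {n : ℕ} (F : Finset (Finset (Fin n))) (w : Finset (Fin n) → ℝ)
    (q : Fin n → Finset (Fin n) → ℝ) (i : Fin n) :
    WF F w q =
      (∑ A ∈ F.filter (fun A => i ∈ A), q i A * wqmiF F w q i A)
      + ((∑ A ∈ F.filter (fun A => i ∈ A),
            ∑ B ∈ F.filter (fun B => B ⊆ A.erase i),
              (∏ j ∈ B, q j A) * mobiusF F w B)
        + ∑ A ∈ F.filter (fun A => i ∉ A),
            ∑ B ∈ F.filter (fun B => B ⊆ A),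
              (∏ j ∈ B, q j A) * mobiusF F w B) := by
  unfold WF
  rw [← Finset.sum_filter_add_sum_filter_not F (fun A => i ∈ A)]
  have h1 : ∀ A ∈ F.filter (fun A => i ∈ A),
      (∑ B ∈ F.filter (fun B => B ⊆ A), (∏ j ∈ B, q j A) * mobiusF F w B)
      = q i A * wqmiF F w q i A
        + ∑ B ∈ F.filter (fun B => B ⊆ A.erase i), (∏ j ∈ B, q j A) * mobiusF F w B := by
    intro A hA
    obtain ⟨hAF, hiA⟩ := Finset.mem_filter.mp hA
    rw [← Finset.sum_filter_add_sum_filter_not (F.filter (fun B => B ⊆ A)) (fun B => i ∈ B)]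
    congr 1
    · rw [wqmiF, Finset.mul_sum]
      rw [Finset.filter_filter]
      have hset : F.filter (fun B => B ⊆ A ∧ i ∈ B) = F.filter (fun B => i ∈ B ∧ B ⊆ A) := by
        apply Finset.filter_congr; intro B _; simp [and_comm]
      rw [hset]
      apply Finset.sum_congr rfl
      intro B hB
      obtain ⟨_, hiB, _⟩ := Finset.mem_filter.mp hB
      rw [← Finset.mul_prod_erase B (fun j => q j A) hiB]
      ring
    · rw [Finset.filter_filter]
      apply Finset.sum_congr _ (fun _ _ => rfl)
      apply Finset.filter_congr; intro B _
      simp only [Finset.subset_erase]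
  rw [Finset.sum_congr rfl h1, Finset.sum_add_distrib, add_assoc]

/-- `wqmiF` does not depend on the `i`-th coordinate of `q`. -/
lemma wqmiF_update {n : ℕ} (F : Finset (Finset (Fin n))) (w : Finset (Fin n) → ℝ)
    (q : Fin n → Finset (Fin n) → ℝ) (i : Fin n) (f : Finset (Fin n) → ℝ)
    (A : Finset (Fin n)) :
    wqmiF F w (Function.update q i f) i A = wqmiF F w q i A := by
  unfold wqmiF
  apply Finset.sum_congr rfl
  intro B _
  congr 1
  apply Finset.prod_congr rfl
  intro j hj
  rw [Function.update_of_ne (Finset.ne_of_mem_erase hj)]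

lemma prod_update_of_not_mem {n : ℕ} (q : Fin n → Finset (Fin n) → ℝ) (i : Fin n)
    (f : Finset (Fin n) → ℝ) (B A : Finset (Fin n)) (hiB : i ∉ B) :
    (∏ j ∈ B, Function.update q i f j A) = ∏ j ∈ B, q j A := by
  apply Finset.prod_congr rfl
  intro j hj
  rw [Function.update_of_ne (fun (h : j = i) => hiB (h ▸ hj))]

/-- One-step improvement: replace coordinate `i` by an extreme point without
decreasing the worth. -/
lemma step_lemma {n : ℕ} (F : Finset (Finset (Fin n)))
    (hFs : ∀ i : Fin n, {i} ∈ F) (w : Finset (Fin n) → ℝ)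
    (q : Fin n → Finset (Fin n) → ℝ) (hq : fuzzyCoverF F q) (i : Fin n) :
    ∃ A ∈ F, i ∈ A ∧
      fuzzyCoverF F (Function.update q i (fun B => if B = A then (1:ℝ) else 0)) ∧
      WF F w q ≤ WF F w (Function.update q i (fun B => if B = A then (1:ℝ) else 0)) := by
  have hne : (F.filter (fun A => i ∈ A)).Nonempty :=
    ⟨{i}, Finset.mem_filter.mpr ⟨hFs i, Finset.mem_singleton_self i⟩⟩
  obtain ⟨Astar, hAstar, hmax⟩ := Finset.exists_max_image _ (wqmiF F w q i) hne
  obtain ⟨hAF, hiA⟩ := Finset.mem_filter.mp hAstar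
  refine ⟨Astar, hAF, hiA, ?_, ?_⟩
  · -- fuzzy cover
    intro j
    by_cases hj : i = j
    · subst hj
      rw [Function.update_self]
      refine ⟨fun A => by positivity, fun A hA => ?_, ?_⟩
      · by_cases h : A = Astar
        · subst h; rcases hA with h | h
          · exact absurd hiA h
          · exact absurd hAF h
        · simp [h]
      · rw [Finset.sum_ite_eq' (F.filter (fun A => i ∈ A)) Astar (fun _ => (1:ℝ))]
        simp [hAstar]
    · rw [Function.update_of_ne (fun h => hj h.symm)]
      exact hq j
  · -- worth inequality
    set q' := Function.update q i (fun B => if B = Astar then (1:ℝ) else 0) with hq'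
    rw [WF_decomp F w q i, WF_decomp F w q' i]
    have hrem1 : ∀ A ∈ F.filter (fun A => i ∈ A),
        (∑ B ∈ F.filter (fun B => B ⊆ A.erase i), (∏ j ∈ B, q' j A) * mobiusF F w B)
        = ∑ B ∈ F.filter (fun B => B ⊆ A.erase i), (∏ j ∈ B, q j A) * mobiusF F w B := by
      intro A _
      apply Finset.sum_congr rfl
      intro B hB
      obtain ⟨_, hBA⟩ := Finset.mem_filter.mp hB
      have hiB : i ∉ B := fun h => (Finset.mem_erase.mp (hBA h)).1 rfl
      rw [hq', prod_update_of_not_mem q i _ B A hiB]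
    have hrem2 : ∀ A ∈ F.filter (fun A => i ∉ A),
        (∑ B ∈ F.filter (fun B => B ⊆ A), (∏ j ∈ B, q' j A) * mobiusF F w B)
        = ∑ B ∈ F.filter (fun B => B ⊆ A), (∏ j ∈ B, q j A) * mobiusF F w B := by
      intro A hA
      obtain ⟨_, hiA'⟩ := Finset.mem_filter.mp hA
      apply Finset.sum_congr rfl
      intro B hB
      obtain ⟨_, hBA⟩ := Finset.mem_filter.mp hB
      have hiB : i ∉ B := fun h => hiA' (hBA h)
      rw [hq', prod_update_of_not_mem q i _ B A hiB]
    rw [Finset.sum_congr rfl hrem1, Finset.sum_congr rfl hrem2]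
    apply add_le_add_left
    have hlin : (∑ A ∈ F.filter (fun A => i ∈ A), q' i A * wqmiF F w q' i A)
        = wqmiF F w q i Astar := by
      have : ∀ A ∈ F.filter (fun A => i ∈ A),
          q' i A * wqmiF F w q' i A
          = if A = Astar then wqmiF F w q i Astar else 0 := by
        intro A _
        rw [hq', Function.update_self, wqmiF_update]
        by_cases h : A = Astar <;> simp [h]
      rw [Finset.sum_congr rfl this, Finset.sum_ite_eq' (F.filter (fun A => i ∈ A)) Astar
        (fun _ => wqmiF F w q i Astar)]
      simp [hAstar]
    rw [hlin]
    calc (∑ A ∈ F.filter (fun A => i ∈ A), q i A * wqmiF F w q i A)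
        ≤ ∑ A ∈ F.filter (fun A => i ∈ A), q i A * wqmiF F w q i Astar := by
          apply Finset.sum_le_sum
          intro A hA
          exact mul_le_mul_of_nonneg_left (hmax A hA) ((hq i).1 A)
      _ = wqmiF F w q i Astar := by
          rw [← Finset.sum_mul, (hq i).2.2, one_mul]

/-- in the lower-dimensional setting the global worth decomposes as
`W(q) = W_i(q_i | q_{−i}) + W_{−i}(q_{−i})` with
`W_i(q_i | q_{−i}) = ∑_{A ∈ F_i} q_i^A · w_{q_{−i}}(A)` linear in `q_i`;
consequently every fuzzy cover is dominated by one all of whose coordinates are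
extreme points of the simplices `Δ̄_i`. -/
theorem worth_decomposition_F {n : ℕ} (F : Finset (Finset (Fin n)))
    (hF0 : (∅ : Finset (Fin n)) ∈ F) (hFs : ∀ i : Fin n, {i} ∈ F)
    (w : Finset (Fin n) → ℝ) (hw0 : ∀ A ∈ F, 0 ≤ w A) (hw : w ∅ = 0) :
    (∀ q : Fin n → Finset (Fin n) → ℝ, fuzzyCoverF F q → ∀ i : Fin n,
      WF F w q =
        (∑ A ∈ F.filter (fun A => i ∈ A), q i A * wqmiF F w q i A)
        + ((∑ A ∈ F.filter (fun A => i ∈ A),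
              ∑ B ∈ F.filter (fun B => B ⊆ A.erase i),
                (∏ j ∈ B, q j A) * mobiusF F w B)
          + ∑ A ∈ F.filter (fun A => i ∉ A),
              ∑ B ∈ F.filter (fun B => B ⊆ A),
                (∏ j ∈ B, q j A) * mobiusF F w B)) ∧
    (∀ q : Fin n → Finset (Fin n) → ℝ, fuzzyCoverF F q →
      ∃ qbar : Fin n → Finset (Fin n) → ℝ, fuzzyCoverF F qbar ∧
        (∀ i : Fin n, ∃ A ∈ F, i ∈ A ∧
          qbar i = fun B => if B = A then (1 : ℝ) else 0) ∧
        WF F w q ≤ WF F w qbar) := by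
  constructor
  · intro q _ i
    exact WF_decomp F w q i
  · intro q hq
    have main : ∀ s : Finset (Fin n), ∀ q : Fin n → Finset (Fin n) → ℝ, fuzzyCoverF F q →
        ∃ qbar : Fin n → Finset (Fin n) → ℝ, fuzzyCoverF F qbar ∧
          (∀ i ∈ s, ∃ A ∈ F, i ∈ A ∧ qbar i = fun B => if B = A then (1:ℝ) else 0) ∧
          WF F w q ≤ WF F w qbar := by
      intro s
      induction s using Finset.induction_on with
      | empty => intro q hq; exact ⟨q, hq, fun i hi => absurd hi (Finset.notMem_empty i),
          le_refl _⟩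
      | @insert i s his ih =>
        intro q hq
        obtain ⟨qbar, hqbar, hext, hle⟩ := ih q hq
        obtain ⟨A, hAF, hiA, hcov, hle2⟩ := step_lemma F hFs w qbar hqbar i
        refine ⟨_, hcov, ?_, le_trans hle hle2⟩
        intro j hj
        rcases Finset.mem_insert.mp hj with rfl | hjs
        · exact ⟨A, hAF, hiA, by rw [Function.update_self]⟩
        · obtain ⟨A', hA'F, hjA', hA'⟩ := hext j hjs
          refine ⟨A', hA'F, hjA', ?_⟩
          rw [Function.update_of_ne (fun (h : j = i) => his (h ▸ hjs)), hA']
    obtain ⟨qbar, h1, h2, h3⟩ := main Finset.univ q hq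
    exact ⟨qbar, h1, fun i => h2 i (Finset.mem_univ i), h3⟩
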